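/- Let k ≥ 1 and let S, S' ⊆ [0,k] be size-n subsets that are close, i.e. admit a bijection g : S → S' with g(i) ∈ {i−1, i, i+1} for all i ∈ S. Then there exists a unique collection of pairwise disjoint subintervals of [0,k], consisting of intervals I_1, …, I_r and J_1, …, J_s each having at least two elements, such that: (a) on the complement of the union of all these intervals, S and S' coincide, i.e. ([0,k] ∖ (⋃_a I_a ∪ ⋃_b J_b)) ∩ S = ([0,k] ∖ (⋃_a I_a ∪ ⋃_b J_b)) ∩ S'; (b) for each a, if I_a = [i,j] then I_a ∩ S = [i, j−1] and I_a ∩ S' = [i+1, j]; (c) for each b, if J_b = [i,j] then J_b ∩ S' = [i, j−1] and J_b ∩ S = [i+1, j]. Uniqueness means the pair consisting of the set of intervals {I_a} and the set of intervals {J_b} is uniquely determined by S and S'. -/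

import Mathlib

/-- Two finite sets of integers are *close* if there is a bijection `g : S → S'`
with `g i ∈ {i-1, i, i+1}` for every `i ∈ S`. -/
def IsClose (S S' : Finset ℤ) : Prop :=
  ∃ g : ℤ → ℤ, Set.BijOn g ↑S ↑S' ∧ ∀ i ∈ S, g i = i - 1 ∨ g i = i ∨ g i = i + 1

namespace Stmt3

open Finset

/-- counting function -/
noncomputable def fc (S : Finset ℤ) (x : ℤ) : ℤ :=
  ((S.filter (fun i => i ≤ x)).card : ℤ)

noncomputable def chi (S : Finset ℤ) (x : ℤ) : ℤ := if x ∈ S then 1 else 0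

lemma chi_mem {S : Finset ℤ} {x : ℤ} : chi S x = 1 ↔ x ∈ S := by
  unfold chi; split <;> simp_all

lemma chi_not_mem {S : Finset ℤ} {x : ℤ} (h : x ∉ S) : chi S x = 0 := by
  unfold chi; rw [if_neg h]

lemma chi_bound (S : Finset ℤ) (x : ℤ) : chi S x = 0 ∨ chi S x = 1 := by
  unfold chi; split <;> simp

lemma fc_step (S : Finset ℤ) (x : ℤ) : fc S x = fc S (x - 1) + chi S x := by
  classical
  unfold fc chi
  by_cases h : x ∈ S
  · rw [if_pos h]
    have he : S.filter (fun i => i ≤ x) = insert x (S.filter (fun i => i ≤ x - 1)) := by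
      ext i
      simp only [mem_filter, mem_insert]
      constructor
      · rintro ⟨hi, hix⟩
        rcases eq_or_lt_of_le hix with h1 | h1
        · exact Or.inl h1
        · exact Or.inr ⟨hi, by omega⟩
      · rintro (rfl | ⟨hi, hix⟩)
        · exact ⟨h, le_refl _⟩
        · exact ⟨hi, by omega⟩
    rw [he, card_insert_of_notMem (by simp only [mem_filter, not_and]; intro _; omega)]
    push_cast; ring
  · rw [if_neg h]
    have he : S.filter (fun i => i ≤ x) = S.filter (fun i => i ≤ x - 1) := by
      ext i
      simp only [mem_filter]
      constructor
      · rintro ⟨hi, hix⟩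
        refine ⟨hi, ?_⟩
        rcases eq_or_lt_of_le hix with h1 | h1
        · exact absurd (h1 ▸ hi) h
        · omega
      · rintro ⟨hi, hix⟩; exact ⟨hi, by omega⟩
    rw [he]; ring

lemma fc_neg {S : Finset ℤ} {k : ℤ} (hS : S ⊆ Finset.Icc 0 k) {x : ℤ} (hx : x < 0) :
    fc S x = 0 := by
  unfold fc
  have : S.filter (fun i => i ≤ x) = ∅ := by
    ext i; simp only [mem_filter, notMem_empty, iff_false]
    rintro ⟨hi, hix⟩
    have := hS hi; simp [mem_Icc] at this; omega
  simp [this]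

lemma fc_top {S : Finset ℤ} {k : ℤ} (hS : S ⊆ Finset.Icc 0 k) {x : ℤ} (hx : k ≤ x) :
    fc S x = S.card := by
  unfold fc
  have he : S.filter (fun i => i ≤ x) = S := by
    apply filter_true_of_mem
    intro i hi
    have := hS hi; simp [mem_Icc] at this; omega
  rw [he]

lemma _root_.IsClose.symm {S S' : Finset ℤ} (h : IsClose S S') : IsClose S' S := by
  obtain ⟨g, hbij, hg⟩ := h
  refine ⟨Function.invFunOn g ↑S, hbij.symm hbij.invOn_invFunOn.symm, ?_⟩
  intro j hj
  have hmem : Function.invFunOn g ↑S j ∈ S := hbij.surjOn.mapsTo_invFunOn hj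
  have heq : g (Function.invFunOn g ↑S j) = j := hbij.invOn_invFunOn.2 hj
  rcases hg _ hmem with h1 | h1 | h1 <;> omega

/-- If `x ∉ S`, the near-identity bijection shows `|S ∩ (-∞,x]| ≤ |S' ∩ (-∞,x]|`. -/
lemma fc_le_of_not_mem {S S' : Finset ℤ} (h : IsClose S S') {x : ℤ} (hx : x ∉ S) :
    fc S x ≤ fc S' x := by
  obtain ⟨g, hbij, hg⟩ := h
  unfold fc
  have hcard : (S.filter (fun i => i ≤ x)).card ≤ (S'.filter (fun i => i ≤ x)).card := by
    apply card_le_card_of_injOn g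
    · intro a ha
      simp only [mem_coe, mem_filter] at ha ⊢
      obtain ⟨haS, hax⟩ := ha
      refine ⟨hbij.mapsTo haS, ?_⟩
      rcases hg a haS with h1 | h1 | h1
      · omega
      · omega
      · -- g a = a + 1 ≤ x + 1; if g a = x + 1 then a = x ∈ S, contradiction
        by_contra hc
        push_neg at hc
        have : a = x := by omega
        exact hx (this ▸ haS)
    · intro a ha b hb hab
      apply hbij.injOn
      · exact mem_coe.2 (mem_filter.1 (mem_coe.1 ha)).1
      · exact mem_coe.2 (mem_filter.1 (mem_coe.1 hb)).1
      · exact hab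
  exact_mod_cast hcard

/-- Always `|S ∩ (-∞,x]| ≤ |S' ∩ (-∞,x]| + 1`. -/
lemma fc_le_succ {S S' : Finset ℤ} (h : IsClose S S') (x : ℤ) :
    fc S x ≤ fc S' x + 1 := by
  obtain ⟨g, hbij, hg⟩ := h
  have h1 : fc S x ≤ fc S' (x + 1) := by
    unfold fc
    have hcard : (S.filter (fun i => i ≤ x)).card ≤ (S'.filter (fun i => i ≤ x + 1)).card := by
      apply card_le_card_of_injOn g
      · intro a ha
        simp only [mem_coe, mem_filter] at ha ⊢
        obtain ⟨haS, hax⟩ := ha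
        refine ⟨hbij.mapsTo haS, ?_⟩
        rcases hg a haS with h1 | h1 | h1 <;> omega
      · intro a ha b hb hab
        apply hbij.injOn
        · exact mem_coe.2 (mem_filter.1 (mem_coe.1 ha)).1
        · exact mem_coe.2 (mem_filter.1 (mem_coe.1 hb)).1
        · exact hab
    exact_mod_cast hcard
  have h2 : fc S' (x + 1) = fc S' x + chi S' (x + 1) := by
    have := fc_step S' (x + 1); simpa using this
  rcases chi_bound S' (x + 1) with h3 | h3 <;> omega

/-- A maximal run of value `1` of `f`, encoded as `(i, j)` with the run being `[i, j-1]`. -/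
def RunP (f : ℤ → ℤ) (p : ℤ × ℤ) : Prop :=
  p.1 < p.2 ∧ (∀ x, p.1 ≤ x → x ≤ p.2 - 1 → f x = 1) ∧ f (p.1 - 1) ≠ 1 ∧ f p.2 ≠ 1

lemma run_unique {f : ℤ → ℤ} {p q : ℤ × ℤ} (hp : RunP f p) (hq : RunP f q)
    {x : ℤ} (hp1 : p.1 ≤ x) (hp2 : x ≤ p.2 - 1) (hq1 : q.1 ≤ x) (hq2 : x ≤ q.2 - 1) :
    p = q := by
  obtain ⟨hplt, hprun, hpl, hpr⟩ := hp
  obtain ⟨hqlt, hqrun, hql, hqr⟩ := hq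
  have h1 : p.1 = q.1 := by
    rcases lt_trichotomy p.1 q.1 with h | h | h
    · exact absurd (hprun (q.1 - 1) (by omega) (by omega)) hql
    · exact h
    · exact absurd (hqrun (p.1 - 1) (by omega) (by omega)) hpl
  have h2 : p.2 = q.2 := by
    rcases lt_trichotomy p.2 q.2 with h | h | h
    · exact absurd (hqrun p.2 (by omega) (by omega)) hpr
    · exact h
    · exact absurd (hprun q.2 (by omega) (by omega)) hqr
  exact Prod.ext h1 h2

lemma exists_run_start (f : ℤ → ℤ) (h0 : ∀ y : ℤ, y < 0 → f y = 0) :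
    ∀ n : ℕ, ∀ x : ℤ, x ≤ n → f x = 1 →
      ∃ a, a ≤ x ∧ f (a - 1) ≠ 1 ∧ ∀ y, a ≤ y → y ≤ x → f y = 1 := by
  intro n
  induction n with
  | zero =>
    intro x hx hfx
    have hx0 : 0 ≤ x := by
      by_contra hc; push_neg at hc; rw [h0 x hc] at hfx; omega
    have hxe : x = 0 := by omega
    refine ⟨0, by omega, by rw [h0 (0 - 1) (by omega)]; omega, ?_⟩
    intro y h1 h2
    have : y = 0 := by omega
    rw [this, ← hxe]; exact hfx
  | succ m ih =>
    intro x hx hfx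
    have hx0 : 0 ≤ x := by
      by_contra hc; push_neg at hc; rw [h0 x hc] at hfx; omega
    by_cases hxm : x ≤ m
    · exact ih x hxm hfx
    · by_cases hprev : f (x - 1) = 1
      · obtain ⟨a, ha1, ha2, ha3⟩ := ih (x - 1) (by push_neg at hxm; omega) hprev
        refine ⟨a, by omega, ha2, ?_⟩
        intro y h1 h2
        rcases eq_or_lt_of_le h2 with h | h
        · rw [h]; exact hfx
        · exact ha3 y h1 (by omega)
      · exact ⟨x, le_refl _, hprev, fun y h1 h2 => by have h : y = x := (by omega); rw [h]; exact hfx⟩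

lemma exists_run_end (f : ℤ → ℤ) (k : ℤ) (hk : ∀ y : ℤ, k ≤ y → f y = 0) :
    ∀ n : ℕ, ∀ x : ℤ, k - 1 - x ≤ n → f x = 1 →
      ∃ b, x ≤ b ∧ f (b + 1) ≠ 1 ∧ ∀ y, x ≤ y → y ≤ b → f y = 1 := by
  intro n
  induction n with
  | zero =>
    intro x hx hfx
    have hxk : x ≤ k - 1 := by
      by_contra hc; push_neg at hc; rw [hk x (by omega)] at hfx; omega
    have hxe : x = k - 1 := by omega
    refine ⟨x, le_refl _, by rw [hk (x + 1) (by omega)]; omega,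
      fun y h1 h2 => by have h : y = x := (by omega); rw [h]; exact hfx⟩
  | succ m ih =>
    intro x hx hfx
    have hxk : x ≤ k - 1 := by
      by_contra hc; push_neg at hc; rw [hk x (by omega)] at hfx; omega
    by_cases hxm : k - 1 - x ≤ m
    · exact ih x hxm hfx
    · by_cases hnext : f (x + 1) = 1
      · obtain ⟨b, hb1, hb2, hb3⟩ := ih (x + 1) (by omega) hnext
        refine ⟨b, by omega, hb2, ?_⟩
        intro y h1 h2
        rcases eq_or_lt_of_le h1 with h | h
        · rw [← h]; exact hfx
        · exact hb3 y (by omega) h2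
      · exact ⟨x, le_refl _, hnext, fun y h1 h2 => by have h : y = x := (by omega); rw [h]; exact hfx⟩

lemma exists_runP (f : ℤ → ℤ) (k : ℤ) (h0 : ∀ y : ℤ, y < 0 → f y = 0)
    (hk : ∀ y : ℤ, k ≤ y → f y = 0) {x : ℤ} (hx : f x = 1) :
    ∃ p : ℤ × ℤ, RunP f p ∧ p.1 ≤ x ∧ x ≤ p.2 - 1 ∧ 0 ≤ p.1 ∧ p.2 ≤ k := by
  have hx0 : 0 ≤ x := by
    by_contra hc; push_neg at hc; rw [h0 x hc] at hx; omega
  have hxk : x ≤ k - 1 := by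
    by_contra hc; push_neg at hc; rw [hk x (by omega)] at hx; omega
  obtain ⟨a, ha1, ha2, ha3⟩ := exists_run_start f h0 x.toNat x (by omega) hx
  obtain ⟨b, hb1, hb2, hb3⟩ := exists_run_end f k hk (k - 1 - x).toNat x (by omega) hx
  have ha0 : 0 ≤ a := by
    by_contra hc; push_neg at hc
    have h1 := ha3 a (le_refl _) (by omega)
    rw [h0 a (by omega)] at h1; omega
  have hbk : b ≤ k - 1 := by
    by_contra hc; push_neg at hc
    have := hb3 b (by omega) (le_refl _)
    rw [hk b (by omega)] at this; omega
  refine ⟨(a, b + 1), ⟨by simp; omega, ?_, by simpa using ha2, by simpa using hb2⟩,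
    by simpa using ha1, by simp; omega, by simpa using ha0, by simp; omega⟩
  intro y h1 h2
  simp only at h1 h2
  rcases le_or_gt y x with h | h
  · exact ha3 y h1 h
  · exact hb3 y (by omega) (by omega)

/-- Membership pattern of `S` and `S'` on a maximal run interval. -/
lemma run_inter {S S' : Finset ℤ} {f : ℤ → ℤ}
    (hstep : ∀ x, f x = f (x - 1) + chi S x - chi S' x)
    (hub : ∀ x, f x ≤ 1)
    (hmem1 : ∀ x, f x = 1 → x ∈ S)
    {p : ℤ × ℤ} (hp : RunP f p) :
    S ∩ Finset.Icc p.1 p.2 = Finset.Icc p.1 (p.2 - 1) ∧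
      S' ∩ Finset.Icc p.1 p.2 = Finset.Icc (p.1 + 1) p.2 := by
  obtain ⟨hplt, hprun, hpl, hpr⟩ := hp
  -- boundary analysis at p.1
  have hstep1 := hstep p.1
  have hchiS1 := chi_bound S p.1
  have hchiS'1 := chi_bound S' p.1
  have hf1 : f p.1 = 1 := hprun p.1 (le_refl _) (by omega)
  have hfl0 : f (p.1 - 1) = 0 := by
    have := hub (p.1 - 1); omega
  have hS1 : p.1 ∈ S := hmem1 p.1 hf1
  have hS'1 : p.1 ∉ S' := by
    intro hc
    have : chi S' p.1 = 1 := chi_mem.2 hc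
    have : chi S p.1 ≤ 1 := by omega
    omega
  -- boundary analysis at p.2
  have hstep2 := hstep p.2
  have hchiS2 := chi_bound S p.2
  have hchiS'2 := chi_bound S' p.2
  have hf2 : f (p.2 - 1) = 1 := hprun (p.2 - 1) (by omega) (le_refl _)
  have hf2' : f p.2 = 0 := by
    have := hub p.2; omega
  have hS2 : p.2 ∉ S := by
    intro hc
    have := chi_mem.2 hc; omega
  have hS'2 : p.2 ∈ S' := by
    by_contra hc
    have : chi S' p.2 = 0 := by unfold chi; rw [if_neg hc]
    omega
  -- interior: for p.1 < x < p.2, x ∈ S and x ∈ S'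
  have hint : ∀ x, p.1 < x → x < p.2 → x ∈ S ∧ x ∈ S' := by
    intro x h1 h2
    have hfx : f x = 1 := hprun x (by omega) (by omega)
    have hfx' : f (x - 1) = 1 := hprun (x - 1) (by omega) (by omega)
    have hxS : x ∈ S := hmem1 x hfx
    have hs := hstep x
    have hc1 := chi_bound S x
    have hc2 := chi_bound S' x
    have : chi S x = 1 := chi_mem.2 hxS
    have : chi S' x = 1 := by omega
    exact ⟨hxS, chi_mem.1 this⟩
  constructor
  · ext x
    simp only [mem_inter, mem_Icc]
    constructor
    · rintro ⟨hxS, h1, h2⟩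
      refine ⟨h1, ?_⟩
      rcases eq_or_lt_of_le h2 with h | h
      · exact absurd (h ▸ hxS) hS2
      · omega
    · rintro ⟨h1, h2⟩
      rcases eq_or_lt_of_le h1 with h | h
      · exact ⟨h ▸ hS1, by omega, by omega⟩
      · exact ⟨(hint x h (by omega)).1, by omega, by omega⟩
  · ext x
    simp only [mem_inter, mem_Icc]
    constructor
    · rintro ⟨hxS', h1, h2⟩
      refine ⟨?_, h2⟩
      rcases eq_or_lt_of_le h1 with h | h
      · exact absurd (h ▸ hxS') hS'1
      · omega
    · rintro ⟨h1, h2⟩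
      rcases eq_or_lt_of_le h2 with h | h
      · exact ⟨h ▸ hS'2, by omega, by omega⟩
      · exact ⟨(hint x (by omega) h).2, by omega, by omega⟩

/-- Two distinct maximal runs of the same value have disjoint closed intervals. -/
lemma disj_same {f : ℤ → ℤ} {p q : ℤ × ℤ} (hp : RunP f p) (hq : RunP f q) (hne : p ≠ q) :
    Disjoint (Finset.Icc p.1 p.2) (Finset.Icc q.1 q.2) := by
  rw [Finset.disjoint_left]
  intro x hxp hxq
  simp only [mem_Icc] at hxp hxq
  have hplt := hp.1
  have hqlt := hq.1
  rcases eq_or_lt_of_le hxp.2 with hp2 | hp2 <;> rcases eq_or_lt_of_le hxq.2 with hq2 | hq2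
  · -- x = p.2 = q.2 : runs share p.2 - 1
    exact hne (run_unique hp hq (x := p.2 - 1) (by omega) (by omega) (by omega) (by omega))
  · -- x = p.2, x ≤ q.2 - 1
    have h1 := hq.2.1 x hxq.1 (by omega)
    rw [hp2] at h1
    exact hp.2.2.2 h1
  · have h1 := hp.2.1 x hxp.1 (by omega)
    rw [hq2] at h1
    exact hq.2.2.2 h1
  · exact hne (run_unique hp hq (x := x) hxp.1 (by omega) hxq.1 (by omega))

/-- A run of `1` and a run of `-1` (i.e. run of `1` for `-f`) have disjoint closed intervals,
given that `f` changes by at most 1 at each step. -/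
lemma disj_mixed {f : ℤ → ℤ} (hd : ∀ x : ℤ, f x ≤ f (x - 1) + 1 ∧ f (x - 1) ≤ f x + 1)
    {p q : ℤ × ℤ} (hp : RunP f p) (hq : RunP (fun x => - f x) q) :
    Disjoint (Finset.Icc p.1 p.2) (Finset.Icc q.1 q.2) := by
  rw [Finset.disjoint_left]
  intro x hxp hxq
  simp only [mem_Icc] at hxp hxq
  have hplt := hp.1
  have hqlt := hq.1
  have hq' : ∀ y, q.1 ≤ y → y ≤ q.2 - 1 → f y = -1 := by
    intro y h1 h2
    have := hq.2.1 y h1 h2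
    simp only at this; omega
  rcases eq_or_lt_of_le hxp.2 with hp2 | hp2 <;> rcases eq_or_lt_of_le hxq.2 with hq2 | hq2
  · -- x = p.2 = q.2 : f (x-1) = 1 and = -1
    have h1 := hp.2.1 (x - 1) (by omega) (by omega)
    have h2 := hq' (x - 1) (by omega) (by omega)
    omega
  · -- x = p.2, x ≤ q.2 - 1 : f(x-1) = 1, f x = -1
    have h1 := hp.2.1 (x - 1) (by omega) (by omega)
    have h2 := hq' x hxq.1 (by omega)
    have := hd x; omega
  · -- x ≤ p.2 - 1, x = q.2 : f x = 1, f(x-1) = -1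
    have h1 := hp.2.1 x hxp.1 (by omega)
    have h2 := hq' (x - 1) (by omega) (by omega)
    have := hd x; omega
  · have h1 := hp.2.1 x hxp.1 (by omega)
    have h2 := hq' x hxq.1 (by omega)
    omega

end Stmt3

/-- **Corollary (canonical interval collection for a close pair).**
If size-`n` subsets `S, S' ⊆ [0,k]` are close, then there is a *unique* pair of
families of pairwise disjoint subintervals of `[0,k]` (encoded by their endpoint pairs
`(i,j)` with `i < j`, so each interval has at least two elements): intervals `I_a`
with `I_a ∩ S = [i, j-1]` and `I_a ∩ S' = [i+1, j]`, intervals `J_b` with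
`J_b ∩ S' = [i, j-1]` and `J_b ∩ S = [i+1, j]`, such that `S` and `S'` coincide on the
complement of the union of all these intervals. -/
theorem stmt_3 (k : ℤ) (hk : 1 ≤ k) (n : ℕ) (S S' : Finset ℤ)
    (hS : S ⊆ Finset.Icc 0 k) (hS' : S' ⊆ Finset.Icc 0 k)
    (hcardS : S.card = n) (hcardS' : S'.card = n)
    (hclose : IsClose S S') :
    ∃! IJ : Finset (ℤ × ℤ) × Finset (ℤ × ℤ),
      (∀ p ∈ IJ.1 ∪ IJ.2, 0 ≤ p.1 ∧ p.1 < p.2 ∧ p.2 ≤ k) ∧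
      (∀ p ∈ IJ.1 ∪ IJ.2, ∀ q ∈ IJ.1 ∪ IJ.2, p ≠ q →
        Disjoint (Finset.Icc p.1 p.2) (Finset.Icc q.1 q.2)) ∧
      ((Finset.Icc 0 k \ (IJ.1 ∪ IJ.2).biUnion (fun p => Finset.Icc p.1 p.2)) ∩ S
        = (Finset.Icc 0 k \ (IJ.1 ∪ IJ.2).biUnion (fun p => Finset.Icc p.1 p.2)) ∩ S') ∧
      (∀ p ∈ IJ.1,
        S ∩ Finset.Icc p.1 p.2 = Finset.Icc p.1 (p.2 - 1) ∧
        S' ∩ Finset.Icc p.1 p.2 = Finset.Icc (p.1 + 1) p.2) ∧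
      (∀ p ∈ IJ.2,
        S' ∩ Finset.Icc p.1 p.2 = Finset.Icc p.1 (p.2 - 1) ∧
        S ∩ Finset.Icc p.1 p.2 = Finset.Icc (p.1 + 1) p.2) := by
  classical
  set f : ℤ → ℤ := fun x => Stmt3.fc S x - Stmt3.fc S' x with hfdef
  -- basic facts about f
  have hstep : ∀ x : ℤ, f x = f (x - 1) + Stmt3.chi S x - Stmt3.chi S' x := by
    intro x
    have h1 := Stmt3.fc_step S x
    have h2 := Stmt3.fc_step S' x
    simp only [hfdef]; omega
  have hstep2 : ∀ x : ℤ, f (x + 1) = f x + Stmt3.chi S (x + 1) - Stmt3.chi S' (x + 1) := by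
    intro x
    have := hstep (x + 1)
    have he : x + 1 - 1 = x := by ring
    rwa [he] at this
  have h0 : ∀ y : ℤ, y < 0 → f y = 0 := by
    intro y hy
    simp only [hfdef]
    rw [Stmt3.fc_neg hS hy, Stmt3.fc_neg hS' hy]
    ring
  have hktop : ∀ y : ℤ, k ≤ y → f y = 0 := by
    intro y hy
    simp only [hfdef]
    rw [Stmt3.fc_top hS hy, Stmt3.fc_top hS' hy, hcardS, hcardS']
    ring
  have hub : ∀ x : ℤ, f x ≤ 1 := by
    intro x
    have := Stmt3.fc_le_succ hclose x
    simp only [hfdef]; omega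
  have hlb : ∀ x : ℤ, -1 ≤ f x := by
    intro x
    have := Stmt3.fc_le_succ hclose.symm x
    simp only [hfdef]; omega
  have hmem1 : ∀ x : ℤ, f x = 1 → x ∈ S := by
    intro x hx
    by_contra hc
    have := Stmt3.fc_le_of_not_mem hclose hc
    simp only [hfdef] at hx; omega
  have hmem1' : ∀ x : ℤ, f x = -1 → x ∈ S' := by
    intro x hx
    by_contra hc
    have := Stmt3.fc_le_of_not_mem hclose.symm hc
    simp only [hfdef] at hx; omega
  have hd : ∀ x : ℤ, f x ≤ f (x - 1) + 1 ∧ f (x - 1) ≤ f x + 1 := by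
    intro x
    have := hstep x
    have c1 := Stmt3.chi_bound S x
    have c2 := Stmt3.chi_bound S' x
    omega
  have h0' : ∀ y : ℤ, y < 0 → - f y = 0 := fun y hy => by rw [h0 y hy]; ring
  have hk' : ∀ y : ℤ, k ≤ y → - f y = 0 := fun y hy => by rw [hktop y hy]; ring
  -- the canonical families
  set A : Finset (ℤ × ℤ) :=
    (Finset.Icc 0 k ×ˢ Finset.Icc 0 k).filter (fun p => Stmt3.RunP f p) with hA
  set B : Finset (ℤ × ℤ) :=
    (Finset.Icc 0 k ×ˢ Finset.Icc 0 k).filter (fun p => Stmt3.RunP (fun x => - f x) p) with hB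
  have hbnd : ∀ (g : ℤ → ℤ), (∀ y : ℤ, y < 0 → g y = 0) → (∀ y : ℤ, k ≤ y → g y = 0) →
      ∀ p : ℤ × ℤ, Stmt3.RunP g p → 0 ≤ p.1 ∧ p.1 ≤ k ∧ 0 ≤ p.2 ∧ p.2 ≤ k := by
    intro g hg0 hgk p hp
    obtain ⟨hlt, hrun, _, _⟩ := hp
    have h1 : g p.1 = 1 := hrun p.1 (le_refl _) (by omega)
    have h2 : g (p.2 - 1) = 1 := hrun (p.2 - 1) (by omega) (le_refl _)
    have h3 : 0 ≤ p.1 := by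
      by_contra hc; push_neg at hc; rw [hg0 p.1 hc] at h1; omega
    have h4 : p.2 - 1 ≤ k - 1 := by
      by_contra hc; push_neg at hc; rw [hgk (p.2 - 1) (by omega)] at h2; omega
    omega
  have hmemA : ∀ p : ℤ × ℤ, p ∈ A ↔ Stmt3.RunP f p := by
    intro p
    rw [hA, Finset.mem_filter, Finset.mem_product]
    constructor
    · exact fun h => h.2
    · intro h
      have := hbnd f h0 hktop p h
      simp only [Finset.mem_Icc]
      exact ⟨⟨⟨this.1, this.2.1⟩, this.2.2.1, this.2.2.2⟩, h⟩
  have hmemB : ∀ p : ℤ × ℤ, p ∈ B ↔ Stmt3.RunP (fun x => - f x) p := by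
    intro p
    rw [hB, Finset.mem_filter, Finset.mem_product]
    constructor
    · exact fun h => h.2
    · intro h
      have := hbnd (fun x => - f x) h0' hk' p h
      simp only [Finset.mem_Icc]
      exact ⟨⟨⟨this.1, this.2.1⟩, this.2.2.1, this.2.2.2⟩, h⟩
  refine ⟨(A, B), ⟨?_, ?_, ?_, ?_, ?_⟩, ?_⟩
  · -- bounds
    intro p hp
    rcases Finset.mem_union.1 hp with h | h
    · have hr := (hmemA p).1 h
      have := hbnd f h0 hktop p hr
      exact ⟨this.1, hr.1, this.2.2.2⟩
    · have hr := (hmemB p).1 h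
      have := hbnd (fun x => - f x) h0' hk' p hr
      exact ⟨this.1, hr.1, this.2.2.2⟩
  · -- pairwise disjoint
    intro p hp q hq hne
    rcases Finset.mem_union.1 hp with h1 | h1 <;> rcases Finset.mem_union.1 hq with h2 | h2
    · exact Stmt3.disj_same ((hmemA p).1 h1) ((hmemA q).1 h2) hne
    · exact Stmt3.disj_mixed hd ((hmemA p).1 h1) ((hmemB q).1 h2)
    · exact (Stmt3.disj_mixed hd ((hmemA q).1 h2) ((hmemB p).1 h1)).symm
    · -- both in B : runs of -f
      apply Stmt3.disj_same ((hmemB p).1 h1) ((hmemB q).1 h2) hne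
  · -- complement
    ext x
    simp only [Finset.mem_inter, Finset.mem_sdiff, Finset.mem_biUnion]
    constructor
    · rintro ⟨⟨hx1, hx2⟩, hxS⟩
      refine ⟨⟨hx1, hx2⟩, ?_⟩
      by_contra hxS'
      have hchi1 : Stmt3.chi S x = 1 := Stmt3.chi_mem.2 hxS
      have hchi2 : Stmt3.chi S' x = 0 := by
        unfold Stmt3.chi; rw [if_neg hxS']
      have hfx := hstep x
      by_cases h1 : f x = 1
      · obtain ⟨p, hp, hpx1, hpx2, _, _⟩ := Stmt3.exists_runP f k h0 hktop h1
        exact hx2 ⟨p, Finset.mem_union_left _ ((hmemA p).2 hp),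
          Finset.mem_Icc.2 ⟨hpx1, by omega⟩⟩
      · have h2 : f (x - 1) = -1 := by
          have := hub x; have := hlb (x - 1); omega
        have h3 : (fun y => - f y) (x - 1) = 1 := by simp only; omega
        obtain ⟨p, hp, hpx1, hpx2, _, _⟩ :=
          Stmt3.exists_runP (fun y => - f y) k h0' hk' h3
        exact hx2 ⟨p, Finset.mem_union_right _ ((hmemB p).2 hp),
          Finset.mem_Icc.2 ⟨by omega, by omega⟩⟩
    · rintro ⟨⟨hx1, hx2⟩, hxS'⟩
      refine ⟨⟨hx1, hx2⟩, ?_⟩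
      by_contra hxS
      have hchi1 : Stmt3.chi S x = 0 := by
        unfold Stmt3.chi; rw [if_neg hxS]
      have hchi2 : Stmt3.chi S' x = 1 := Stmt3.chi_mem.2 hxS'
      have hfx := hstep x
      by_cases h1 : f x = -1
      · have h3 : (fun y => - f y) x = 1 := by simp only; omega
        obtain ⟨p, hp, hpx1, hpx2, _, _⟩ :=
          Stmt3.exists_runP (fun y => - f y) k h0' hk' h3
        exact hx2 ⟨p, Finset.mem_union_right _ ((hmemB p).2 hp),
          Finset.mem_Icc.2 ⟨hpx1, by omega⟩⟩
      · have h2 : f (x - 1) = 1 := by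
          have := hlb x; have := hub (x - 1); omega
        obtain ⟨p, hp, hpx1, hpx2, _, _⟩ := Stmt3.exists_runP f k h0 hktop h2
        exact hx2 ⟨p, Finset.mem_union_left _ ((hmemA p).2 hp),
          Finset.mem_Icc.2 ⟨by omega, by omega⟩⟩
  · -- condition on the I-intervals
    intro p hp
    exact Stmt3.run_inter hstep hub hmem1 ((hmemA p).1 hp)
  · -- condition on the J-intervals
    intro p hp
    refine Stmt3.run_inter (S := S') (S' := S) (f := fun x => - f x) ?_ ?_ ?_ ((hmemB p).1 hp)
    · intro x
      have := hstep x
      omega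
    · intro x
      have := hlb x
      omega
    · intro x hx
      exact hmem1' x (by omega)
  · -- uniqueness
    rintro ⟨C, D⟩ ⟨H1, H2, H3, H4, H5⟩
    simp only at H1 H2 H3 H4 H5
    have hCD : ∀ p : ℤ × ℤ, p ∈ C → p ∈ D → False := by
      intro p hpC hpD
      have h1 := (H4 p hpC).1
      have h2 := (H5 p hpD).2
      have hlt := (H1 p (Finset.mem_union_left _ hpC)).2.1
      have hm : p.1 ∈ Finset.Icc p.1 (p.2 - 1) := Finset.mem_Icc.2 ⟨le_refl _, by omega⟩
      rw [← h1, h2] at hm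
      have := Finset.mem_Icc.1 hm
      omega
    have hdis : ∀ p q : ℤ × ℤ, p ∈ C ∪ D → q ∈ C ∪ D → p ≠ q →
        ∀ x : ℤ, x ∈ Finset.Icc p.1 p.2 → x ∈ Finset.Icc q.1 q.2 → False := by
      intro p q hp hq hne x hxp hxq
      exact Finset.disjoint_left.1 (H2 p hp q hq hne) hxp hxq
    -- the profile function of the family (C, D)
    set PC : ℤ → Prop := fun x => ∃ p ∈ C, p.1 ≤ x ∧ x ≤ p.2 - 1 with hPC
    set PD : ℤ → Prop := fun x => ∃ p ∈ D, p.1 ≤ x ∧ x ≤ p.2 - 1 with hPD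
    have hPCi : ∀ (x : ℤ) (p : ℤ × ℤ), p ∈ C → p.1 ≤ x → x ≤ p.2 - 1 → PC x := by
      intro x p h1 h2 h3; rw [hPC]; exact ⟨p, h1, h2, h3⟩
    have hPCe : ∀ x : ℤ, PC x → ∃ p ∈ C, p.1 ≤ x ∧ x ≤ p.2 - 1 := by
      intro x hx; rwa [hPC] at hx
    have hPDi : ∀ (x : ℤ) (p : ℤ × ℤ), p ∈ D → p.1 ≤ x → x ≤ p.2 - 1 → PD x := by
      intro x p h1 h2 h3; rw [hPD]; exact ⟨p, h1, h2, h3⟩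
    have hPDe : ∀ x : ℤ, PD x → ∃ p ∈ D, p.1 ≤ x ∧ x ≤ p.2 - 1 := by
      intro x hx; rwa [hPD] at hx
    have hPCD : ∀ x : ℤ, PC x → PD x → False := by
      intro x h1 h2
      obtain ⟨p, hpC, hp1, hp2⟩ := hPCe x h1
      obtain ⟨q, hqD, hq1, hq2⟩ := hPDe x h2
      by_cases hpq : p = q
      · exact hCD p hpC (hpq ▸ hqD)
      · exact hdis p q (Finset.mem_union_left _ hpC) (Finset.mem_union_right _ hqD) hpq x
          (Finset.mem_Icc.2 ⟨hp1, by omega⟩) (Finset.mem_Icc.2 ⟨hq1, by omega⟩)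
    set F : ℤ → ℤ := fun x => if PC x then 1 else if PD x then -1 else 0 with hF
    have hFC : ∀ x : ℤ, PC x → F x = 1 := by
      intro x hx; simp only [hF]; rw [if_pos hx]
    have hFD : ∀ x : ℤ, PD x → F x = -1 := by
      intro x hx
      have hnc : ¬ PC x := fun hc => hPCD x hc hx
      simp only [hF]; rw [if_neg hnc, if_pos hx]
    have hF0 : ∀ x : ℤ, ¬ PC x → ¬ PD x → F x = 0 := by
      intro x h1 h2; simp only [hF]; rw [if_neg h1, if_neg h2]
    have hFval : ∀ x : ℤ, (F x = 1 → PC x) ∧ (F x = -1 → PD x) := by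
      intro x
      by_cases h1 : PC x
      · rw [hFC x h1]
        exact ⟨fun _ => h1, fun h => by omega⟩
      · by_cases h2 : PD x
        · rw [hFD x h2]
          exact ⟨fun h => by omega, fun _ => h2⟩
        · rw [hF0 x h1 h2]
          exact ⟨fun h => by omega, fun h => by omega⟩
    -- every element of a run-interval of the family lies in the closed interval
    have hicc : ∀ (p : ℤ × ℤ) (x : ℤ), p.1 ≤ x → x ≤ p.2 - 1 → x ∈ Finset.Icc p.1 p.2 :=
      fun p x h1 h2 => Finset.mem_Icc.2 ⟨h1, by omega⟩
    have hicc' : ∀ (p : ℤ × ℤ) (x : ℤ), p.1 ≤ x → x ≤ p.2 - 1 →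
        x + 1 ∈ Finset.Icc p.1 p.2 :=
      fun p x h1 h2 => Finset.mem_Icc.2 ⟨by omega, by omega⟩
    -- the key induction : f agrees with the profile F
    have hfF : ∀ x : ℤ, -1 ≤ x → f x = F x := by
      refine Int.le_induction ?_ ?_
      · -- base case x = -1
        rw [h0 (-1) (by omega)]
        have hnc : ¬ PC (-1) := by
          intro hc
          obtain ⟨p, hpC, hp1, hp2⟩ := hPCe _ hc
          have := (H1 p (Finset.mem_union_left _ hpC)).1; omega
        have hnd : ¬ PD (-1) := by
          intro hc
          obtain ⟨p, hpD, hp1, hp2⟩ := hPDe _ hc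
          have := (H1 p (Finset.mem_union_right _ hpD)).1; omega
        rw [hF0 _ hnc hnd]
      · -- inductive step
        intro x hx ih
        have hy0 : 0 ≤ x + 1 := by omega
        by_cases hyk : k ≤ x + 1
        · -- beyond k everything is zero
          rw [hktop (x + 1) hyk]
          have hnc : ¬ PC (x + 1) := by
            intro hc
            obtain ⟨p, hpC, hp1, hp2⟩ := hPCe _ hc
            have := (H1 p (Finset.mem_union_left _ hpC)).2.2; omega
          have hnd : ¬ PD (x + 1) := by
            intro hc
            obtain ⟨p, hpD, hp1, hp2⟩ := hPDe _ hc
            have := (H1 p (Finset.mem_union_right _ hpD)).2.2; omega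
          rw [hF0 _ hnc hnd]
        · push_neg at hyk
          have hicc0 : x + 1 ∈ Finset.Icc 0 k := Finset.mem_Icc.2 ⟨by omega, by omega⟩
          have hs := hstep2 x
          by_cases hyU : ∃ p ∈ C ∪ D, x + 1 ∈ Finset.Icc p.1 p.2
          · obtain ⟨p, hpCD, hyp⟩ := hyU
            obtain ⟨hy1, hy2⟩ := Finset.mem_Icc.1 hyp
            have hlt := (H1 p hpCD).2.1
            rcases Finset.mem_union.1 hpCD with hpC | hpD
            · -- p is an I-interval
              have h4 := H4 p hpC
              have hSmem : x + 1 ∈ S ↔ x + 1 ≤ p.2 - 1 := by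
                constructor
                · intro h
                  have hm : x + 1 ∈ S ∩ Finset.Icc p.1 p.2 := Finset.mem_inter.2 ⟨h, hyp⟩
                  rw [h4.1] at hm
                  exact (Finset.mem_Icc.1 hm).2
                · intro h
                  have hm : x + 1 ∈ Finset.Icc p.1 (p.2 - 1) := Finset.mem_Icc.2 ⟨hy1, h⟩
                  rw [← h4.1] at hm
                  exact (Finset.mem_inter.1 hm).1
              have hS'mem : x + 1 ∈ S' ↔ p.1 + 1 ≤ x + 1 := by
                constructor
                · intro h
                  have hm : x + 1 ∈ S' ∩ Finset.Icc p.1 p.2 := Finset.mem_inter.2 ⟨h, hyp⟩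
                  rw [h4.2] at hm
                  exact (Finset.mem_Icc.1 hm).1
                · intro h
                  have hm : x + 1 ∈ Finset.Icc (p.1 + 1) p.2 := Finset.mem_Icc.2 ⟨h, hy2⟩
                  rw [← h4.2] at hm
                  exact (Finset.mem_inter.1 hm).1
              by_cases hlast : x + 1 = p.2
              · -- right endpoint of an I-interval
                have hnS : x + 1 ∉ S := fun h => by have := hSmem.1 h; omega
                have hyS' : x + 1 ∈ S' := hS'mem.2 (by omega)
                have hc1 : Stmt3.chi S (x + 1) = 0 := Stmt3.chi_not_mem hnS
                have hc2 : Stmt3.chi S' (x + 1) = 1 := Stmt3.chi_mem.2 hyS'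
                have hFx : F x = 1 := hFC x (hPCi x p hpC (by omega) (by omega))
                have hnc : ¬ PC (x + 1) := by
                  intro hc
                  obtain ⟨q, hqC, hq1, hq2⟩ := hPCe _ hc
                  by_cases hpq : p = q
                  · subst hpq; omega
                  · exact hdis p q (Finset.mem_union_left _ hpC)
                      (Finset.mem_union_left _ hqC) hpq (x + 1) hyp (hicc q _ hq1 hq2)
                have hnd : ¬ PD (x + 1) := by
                  intro hc
                  obtain ⟨q, hqD, hq1, hq2⟩ := hPDe _ hc
                  by_cases hpq : p = q
                  · exact hCD p hpC (hpq ▸ hqD)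
                  · exact hdis p q (Finset.mem_union_left _ hpC)
                      (Finset.mem_union_right _ hqD) hpq (x + 1) hyp (hicc q _ hq1 hq2)
                rw [hF0 _ hnc hnd]
                omega
              · by_cases hfirst : x + 1 = p.1
                · -- left endpoint of an I-interval
                  have hyS : x + 1 ∈ S := hSmem.2 (by omega)
                  have hnS' : x + 1 ∉ S' := fun h => by have := hS'mem.1 h; omega
                  have hc1 : Stmt3.chi S (x + 1) = 1 := Stmt3.chi_mem.2 hyS
                  have hc2 : Stmt3.chi S' (x + 1) = 0 := Stmt3.chi_not_mem hnS'
                  have hnc : ¬ PC x := by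
                    intro hc
                    obtain ⟨q, hqC, hq1, hq2⟩ := hPCe _ hc
                    by_cases hpq : p = q
                    · subst hpq; omega
                    · exact hdis p q (Finset.mem_union_left _ hpC)
                        (Finset.mem_union_left _ hqC) hpq (x + 1) hyp (hicc' q x hq1 hq2)
                  have hnd : ¬ PD x := by
                    intro hc
                    obtain ⟨q, hqD, hq1, hq2⟩ := hPDe _ hc
                    by_cases hpq : p = q
                    · exact hCD p hpC (hpq ▸ hqD)
                    · exact hdis p q (Finset.mem_union_left _ hpC)
                        (Finset.mem_union_right _ hqD) hpq (x + 1) hyp (hicc' q x hq1 hq2)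
                  have hFy : F (x + 1) = 1 := hFC _ (hPCi _ p hpC (by omega) (by omega))
                  rw [hF0 x hnc hnd] at ih
                  omega
                · -- interior point of an I-interval
                  have hyS : x + 1 ∈ S := hSmem.2 (by omega)
                  have hyS' : x + 1 ∈ S' := hS'mem.2 (by omega)
                  have hc1 : Stmt3.chi S (x + 1) = 1 := Stmt3.chi_mem.2 hyS
                  have hc2 : Stmt3.chi S' (x + 1) = 1 := Stmt3.chi_mem.2 hyS'
                  have hFx : F x = 1 := hFC x (hPCi x p hpC (by omega) (by omega))
                  have hFy : F (x + 1) = 1 := hFC _ (hPCi _ p hpC (by omega) (by omega))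
                  omega
            · -- p is a J-interval
              have h5 := H5 p hpD
              have hS'mem : x + 1 ∈ S' ↔ x + 1 ≤ p.2 - 1 := by
                constructor
                · intro h
                  have hm : x + 1 ∈ S' ∩ Finset.Icc p.1 p.2 := Finset.mem_inter.2 ⟨h, hyp⟩
                  rw [h5.1] at hm
                  exact (Finset.mem_Icc.1 hm).2
                · intro h
                  have hm : x + 1 ∈ Finset.Icc p.1 (p.2 - 1) := Finset.mem_Icc.2 ⟨hy1, h⟩
                  rw [← h5.1] at hm
                  exact (Finset.mem_inter.1 hm).1
              have hSmem : x + 1 ∈ S ↔ p.1 + 1 ≤ x + 1 := by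
                constructor
                · intro h
                  have hm : x + 1 ∈ S ∩ Finset.Icc p.1 p.2 := Finset.mem_inter.2 ⟨h, hyp⟩
                  rw [h5.2] at hm
                  exact (Finset.mem_Icc.1 hm).1
                · intro h
                  have hm : x + 1 ∈ Finset.Icc (p.1 + 1) p.2 := Finset.mem_Icc.2 ⟨h, hy2⟩
                  rw [← h5.2] at hm
                  exact (Finset.mem_inter.1 hm).1
              by_cases hlast : x + 1 = p.2
              · -- right endpoint of a J-interval
                have hnS' : x + 1 ∉ S' := fun h => by have := hS'mem.1 h; omega
                have hyS : x + 1 ∈ S := hSmem.2 (by omega)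
                have hc1 : Stmt3.chi S (x + 1) = 1 := Stmt3.chi_mem.2 hyS
                have hc2 : Stmt3.chi S' (x + 1) = 0 := Stmt3.chi_not_mem hnS'
                have hFx : F x = -1 := hFD x (hPDi x p hpD (by omega) (by omega))
                have hnc : ¬ PC (x + 1) := by
                  intro hc
                  obtain ⟨q, hqC, hq1, hq2⟩ := hPCe _ hc
                  by_cases hpq : p = q
                  · exact hCD p (hpq ▸ hqC) hpD
                  · exact hdis p q (Finset.mem_union_right _ hpD)
                      (Finset.mem_union_left _ hqC) hpq (x + 1) hyp (hicc q _ hq1 hq2)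
                have hnd : ¬ PD (x + 1) := by
                  intro hc
                  obtain ⟨q, hqD, hq1, hq2⟩ := hPDe _ hc
                  by_cases hpq : p = q
                  · subst hpq; omega
                  · exact hdis p q (Finset.mem_union_right _ hpD)
                      (Finset.mem_union_right _ hqD) hpq (x + 1) hyp (hicc q _ hq1 hq2)
                rw [hF0 _ hnc hnd]
                omega
              · by_cases hfirst : x + 1 = p.1
                · -- left endpoint of a J-interval
                  have hyS' : x + 1 ∈ S' := hS'mem.2 (by omega)
                  have hnS : x + 1 ∉ S := fun h => by have := hSmem.1 h; omega
                  have hc1 : Stmt3.chi S (x + 1) = 0 := Stmt3.chi_not_mem hnS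
                  have hc2 : Stmt3.chi S' (x + 1) = 1 := Stmt3.chi_mem.2 hyS'
                  have hnc : ¬ PC x := by
                    intro hc
                    obtain ⟨q, hqC, hq1, hq2⟩ := hPCe _ hc
                    by_cases hpq : p = q
                    · exact hCD p (hpq ▸ hqC) hpD
                    · exact hdis p q (Finset.mem_union_right _ hpD)
                        (Finset.mem_union_left _ hqC) hpq (x + 1) hyp (hicc' q x hq1 hq2)
                  have hnd : ¬ PD x := by
                    intro hc
                    obtain ⟨q, hqD, hq1, hq2⟩ := hPDe _ hc
                    by_cases hpq : p = q
                    · subst hpq; omega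
                    · exact hdis p q (Finset.mem_union_right _ hpD)
                        (Finset.mem_union_right _ hqD) hpq (x + 1) hyp (hicc' q x hq1 hq2)
                  have hFy : F (x + 1) = -1 := hFD _ (hPDi _ p hpD (by omega) (by omega))
                  rw [hF0 x hnc hnd] at ih
                  omega
                · -- interior point of a J-interval
                  have hyS' : x + 1 ∈ S' := hS'mem.2 (by omega)
                  have hyS : x + 1 ∈ S := hSmem.2 (by omega)
                  have hc1 : Stmt3.chi S (x + 1) = 1 := Stmt3.chi_mem.2 hyS
                  have hc2 : Stmt3.chi S' (x + 1) = 1 := Stmt3.chi_mem.2 hyS'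
                  have hFx : F x = -1 := hFD x (hPDi x p hpD (by omega) (by omega))
                  have hFy : F (x + 1) = -1 := hFD _ (hPDi _ p hpD (by omega) (by omega))
                  omega
          · -- x + 1 is not covered by any interval of the family
            have h3 := Finset.ext_iff.1 H3 (x + 1)
            simp only [Finset.mem_inter, Finset.mem_sdiff, Finset.mem_biUnion] at h3
            have hiff : (x + 1 ∈ S) ↔ (x + 1 ∈ S') :=
              ⟨fun h => (h3.1 ⟨⟨hicc0, hyU⟩, h⟩).2, fun h => (h3.2 ⟨⟨hicc0, hyU⟩, h⟩).2⟩
            have hceq : Stmt3.chi S (x + 1) = Stmt3.chi S' (x + 1) := by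
              unfold Stmt3.chi
              by_cases h : x + 1 ∈ S
              · rw [if_pos h, if_pos (hiff.1 h)]
              · rw [if_neg h, if_neg (fun hc => h (hiff.2 hc))]
            have hnc : ¬ PC x := by
              intro hc
              obtain ⟨q, hqC, hq1, hq2⟩ := hPCe _ hc
              exact hyU ⟨q, Finset.mem_union_left _ hqC, hicc' q x hq1 hq2⟩
            have hnd : ¬ PD x := by
              intro hc
              obtain ⟨q, hqD, hq1, hq2⟩ := hPDe _ hc
              exact hyU ⟨q, Finset.mem_union_right _ hqD, hicc' q x hq1 hq2⟩
            have hnc' : ¬ PC (x + 1) := by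
              intro hc
              obtain ⟨q, hqC, hq1, hq2⟩ := hPCe _ hc
              exact hyU ⟨q, Finset.mem_union_left _ hqC, hicc q _ hq1 hq2⟩
            have hnd' : ¬ PD (x + 1) := by
              intro hc
              obtain ⟨q, hqD, hq1, hq2⟩ := hPDe _ hc
              exact hyU ⟨q, Finset.mem_union_right _ hqD, hicc q _ hq1 hq2⟩
            rw [hF0 _ hnc' hnd']
            rw [hF0 x hnc hnd] at ih
            omega
    -- from the profile identity, the family (C, D) must be the canonical one
    have hCA : ∀ p ∈ C, p ∈ A := by
      intro p hpC
      have hlt := (H1 p (Finset.mem_union_left _ hpC)).2.1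
      have hp1 := (H1 p (Finset.mem_union_left _ hpC)).1
      refine (hmemA p).2 ⟨hlt, ?_, ?_, ?_⟩
      · intro x h1 h2
        rw [hfF x (by omega)]
        exact hFC x (hPCi x p hpC h1 h2)
      · rw [hfF (p.1 - 1) (by omega)]
        intro hc
        obtain ⟨q, hqC, hq1, hq2⟩ := hPCe _ ((hFval _).1 hc)
        by_cases hpq : p = q
        · subst hpq; omega
        · exact hdis p q (Finset.mem_union_left _ hpC) (Finset.mem_union_left _ hqC) hpq p.1
            (Finset.mem_Icc.2 ⟨le_refl _, by omega⟩) (Finset.mem_Icc.2 ⟨by omega, by omega⟩)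
      · rw [hfF p.2 (by omega)]
        intro hc
        obtain ⟨q, hqC, hq1, hq2⟩ := hPCe _ ((hFval _).1 hc)
        by_cases hpq : p = q
        · subst hpq; omega
        · exact hdis p q (Finset.mem_union_left _ hpC) (Finset.mem_union_left _ hqC) hpq p.2
            (Finset.mem_Icc.2 ⟨by omega, le_refl _⟩) (hicc q _ hq1 hq2)
    have hDB : ∀ p ∈ D, p ∈ B := by
      intro p hpD
      have hlt := (H1 p (Finset.mem_union_right _ hpD)).2.1
      have hp1 := (H1 p (Finset.mem_union_right _ hpD)).1
      refine (hmemB p).2 ⟨hlt, ?_, ?_, ?_⟩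
      · intro x h1 h2
        show - f x = 1
        rw [hfF x (by omega), hFD x (hPDi x p hpD h1 h2)]
        ring
      · show ¬ (- f (p.1 - 1) = 1)
        rw [hfF (p.1 - 1) (by omega)]
        intro hc
        obtain ⟨q, hqD, hq1, hq2⟩ := hPDe _ ((hFval (p.1 - 1)).2 (by omega))
        by_cases hpq : p = q
        · subst hpq; omega
        · exact hdis p q (Finset.mem_union_right _ hpD) (Finset.mem_union_right _ hqD) hpq p.1
            (Finset.mem_Icc.2 ⟨le_refl _, by omega⟩) (Finset.mem_Icc.2 ⟨by omega, by omega⟩)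
      · show ¬ (- f p.2 = 1)
        rw [hfF p.2 (by omega)]
        intro hc
        obtain ⟨q, hqD, hq1, hq2⟩ := hPDe _ ((hFval p.2).2 (by omega))
        by_cases hpq : p = q
        · subst hpq; omega
        · exact hdis p q (Finset.mem_union_right _ hpD) (Finset.mem_union_right _ hqD) hpq p.2
            (Finset.mem_Icc.2 ⟨by omega, le_refl _⟩) (hicc q _ hq1 hq2)
    have hAC : A ⊆ C := by
      intro p hpA
      have hr := (hmemA p).1 hpA
      have hb := hbnd f h0 hktop p hr
      have hlt := hr.1
      have hf1 : f p.1 = 1 := hr.2.1 p.1 (le_refl _) (by omega)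
      have hF1 : F p.1 = 1 := by rw [← hfF p.1 (by omega)]; exact hf1
      obtain ⟨q, hqC, hq1, hq2⟩ := hPCe _ ((hFval _).1 hF1)
      have hqr := (hmemA q).1 (hCA q hqC)
      have heq := Stmt3.run_unique hr hqr (x := p.1) (le_refl _) (by omega) hq1 hq2
      rwa [heq]
    have hBD : B ⊆ D := by
      intro p hpB
      have hr := (hmemB p).1 hpB
      have hb := hbnd (fun x => - f x) h0' hk' p hr
      have hlt := hr.1
      have hf1 : - f p.1 = 1 := hr.2.1 p.1 (le_refl _) (by omega)
      have hF1 : F p.1 = -1 := by rw [← hfF p.1 (by omega)]; omega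
      obtain ⟨q, hqD, hq1, hq2⟩ := hPDe _ ((hFval _).2 hF1)
      have hqr := (hmemB q).1 (hDB q hqD)
      have heq := Stmt3.run_unique hr hqr (x := p.1) (le_refl _) (by omega) hq1 hq2
      rwa [heq]
    have e1 : C = A := Finset.Subset.antisymm (fun p hp => hCA p hp) hAC
    have e2 : D = B := Finset.Subset.antisymm (fun p hp => hDB p hp) hBD
    rw [e1, e2]
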